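/- Reduction of uncontingent revision to lexicographic revision: for every connected preorder C and conditional P>A with P∧A satisfiable, C unc(P>A) = C lex((≤max(P∧A)) ∧ (P → A)), where (≤max(P∧A)) is the set of models in classes 0 through maxidx(P∧A). -/

import Mathlib

open Classical

/- Models are elements of a finite type `M`; propositional formulas are identified with
their sets of models (`Set M`).  A connected preorder (ordered partition
`[C(0),…,C(m)]`, classes possibly empty) is represented by its rank function
`r : M → ℕ`, where `r I` is the index of the class of `I`.  Equality of orders means
equality of the induced binary relations (`sameOrd`). -/

/-- least class index containing a model of `F` -/
noncomputable def minidx {M : Type*} (r : M → ℕ) (F : Set M) : ℕ := sInf (r '' F)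

/-- greatest class index containing a model of `F` -/
noncomputable def maxidx {M : Type*} (r : M → ℕ) (F : Set M) : ℕ := sSup (r '' F)

/-- propositional natural revision:
`C nat(A) = [C(minidx A)∩A, C(0),…,C(minidx A−1), C(minidx A)∖A, C(minidx A+1),…,C(m)]` -/
noncomputable def natSimple {M : Type*} (r : M → ℕ) (A : Set M) : M → ℕ :=
  fun I => if I ∈ A ∧ r I = minidx r A then 0 else r I + 1

/-- conditional natural revision: the models of `P∧¬A` in classes
`minidx(P)..minidx(P∧A)` are dropped below the other models of those classes. -/
noncomputable def natRev {M : Type*} (r : M → ℕ) (P A : Set M) : M → ℕ := fun I =>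
  if r I < minidx r P then r I
  else if r I ≤ minidx r (P ∩ A) then
    (if I ∈ P ∩ Aᶜ then r I + (minidx r (P ∩ A) - minidx r P + 1) else r I)
  else r I + (minidx r (P ∩ A) - minidx r P + 1)

/-- uncontingent revision: the models of `P∧¬A` in classes
`minidx(P)..maxidx(P∧A)` are dropped below the other models of those classes. -/
noncomputable def uncRev {M : Type*} (r : M → ℕ) (P A : Set M) : M → ℕ := fun I =>
  if r I < minidx r P then r I
  else if r I ≤ maxidx r (P ∩ A) then
    (if I ∈ P ∩ Aᶜ then r I + (maxidx r (P ∩ A) - minidx r P + 1) else r I)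
  else r I + (maxidx r (P ∩ A) - minidx r P + 1)

/-- lexicographic revision: `C lex(F) = [C(0)∩F,…,C(m)∩F, C(0)∖F,…,C(m)∖F]` -/
noncomputable def lexRev {M : Type*} [Fintype M] (r : M → ℕ) (F : Set M) : M → ℕ := fun I =>
  if I ∈ F then r I else r I + (Finset.univ.sup r + 1)

/-- line-down revision: the minimal models of `P∧A` are lifted to a new class just
above class `minidx(P∧¬A)`; all other models keep their classes. -/
noncomputable def dowRev {M : Type*} (r : M → ℕ) (P A : Set M) : M → ℕ := fun I =>
  if minidx r (P ∩ A) < minidx r (P ∩ Aᶜ) then r I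
  else if I ∈ P ∩ A ∧ r I = minidx r (P ∩ A) then minidx r (P ∩ Aᶜ)
  else if r I < minidx r (P ∩ Aᶜ) then r I
  else r I + 1

/-- an order satisfies the conditional `P>A` iff every minimal model of `P∧A`
is strictly below every model of `P∧¬A` -/
def satisfiesCond {M : Type*} (r : M → ℕ) (P A : Set M) : Prop :=
  ∀ I ∈ P ∩ A, (∀ J ∈ P ∩ A, r I ≤ r J) → ∀ K ∈ P ∩ Aᶜ, r I < r K

/-- the order viewed as a set of pairs `I ≤ J` -/
def ordRel {M : Type*} (r : M → ℕ) : Set (M × M) := {p | r p.1 ≤ r p.2}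

/-- difference of two orders: symmetric difference of their sets of pairs -/
def diffOrd {M : Type*} (r r' : M → ℕ) : Set (M × M) := symmDiff (ordRel r) (ordRel r')

/-- equality of the induced connected preorders -/
def sameOrd {M : Type*} (r r' : M → ℕ) : Prop := ∀ I J : M, (r I ≤ r J ↔ r' I ≤ r' J)

/-- reduction of uncontingent revision to lexicographic revision:
`C unc(P>A) = C lex((≤max(P∧A)) ∧ (P → A))`. -/
theorem uncontingent_lexicographic {M : Type*} [Fintype M] (r : M → ℕ) (P A : Set M)
    (h : (P ∩ A).Nonempty) :
    sameOrd (uncRev r P A)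
      (lexRev r ({I : M | r I ≤ maxidx r (P ∩ A)} ∩ (Pᶜ ∪ A))) := by
  set m := maxidx r (P ∩ A) with hm
  set p := minidx r P with hpdef
  set F : Set M := {I : M | r I ≤ m} ∩ (Pᶜ ∪ A) with hF
  obtain ⟨x, hxP, hxA⟩ := h
  have hrx_le : r x ≤ m :=
    le_csSup (Set.Finite.bddAbove (Set.toFinite _)) ⟨x, ⟨hxP, hxA⟩, rfl⟩
  have hP : ∀ K, K ∈ P → p ≤ r K := fun K hK => csInf_le (OrderBot.bddBelow _) ⟨K, hK, rfl⟩
  have hpm : p ≤ m := (hP x hxP).trans hrx_le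
  have key : ∀ K : M, uncRev r P A K = if K ∈ F then r K else r K + (m - p + 1) := by
    intro K
    by_cases h1 : r K < p
    · have hKP : K ∉ P := fun hKP => absurd (hP K hKP) (by omega)
      have hKF : K ∈ F := ⟨by simpa using le_of_lt (lt_of_lt_of_le h1 hpm), Or.inl hKP⟩
      simp only [uncRev, ← hpdef, ← hm, if_pos h1, if_pos hKF]
    · by_cases h2 : r K ≤ m
      · by_cases h3 : K ∈ P ∩ Aᶜ
        · have hKF : K ∉ F := by
            rintro ⟨-, hKcup⟩
            rcases hKcup with hc | hc
            · exact hc h3.1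
            · exact h3.2 hc
          simp only [uncRev, ← hpdef, ← hm, if_neg h1, if_pos h2, if_pos h3, if_neg hKF]
        · have hKF : K ∈ F := by
            refine ⟨h2, ?_⟩
            by_cases hKP : K ∈ P
            · exact Or.inr (by_contra fun hA => h3 ⟨hKP, hA⟩)
            · exact Or.inl hKP
          simp only [uncRev, ← hpdef, ← hm, if_neg h1, if_pos h2, if_neg h3, if_pos hKF]
      · have hKF : K ∉ F := fun hKF => h2 hKF.1
        simp only [uncRev, ← hpdef, ← hm, if_neg h1, if_neg h2, if_neg hKF]
  have hb : ∀ K : M, K ∉ F → m + 1 ≤ r K + (m - p + 1) := by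
    intro K hK
    by_cases h2 : r K ≤ m
    · have hKP : K ∈ P := by
        by_contra hKP; exact hK ⟨h2, Or.inl hKP⟩
      have := hP K hKP; omega
    · omega
  have hsup : ∀ K : M, r K ≤ Finset.univ.sup r := fun K =>
    Finset.le_sup (Finset.mem_univ K)
  intro I J
  rw [key I, key J]
  unfold lexRev
  have hsI := hsup I
  have hsJ := hsup J
  by_cases hI : I ∈ F <;> by_cases hJ : J ∈ F <;>
    simp only [hI, hJ, if_true, if_false]
  · have h1 : r I ≤ m := hI.1
    have h2 := hb J hJ
    omega
  · have h1 : r J ≤ m := hJ.1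
    have h2 := hb I hI
    omega
  · omega
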